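/- Let q and a be complex numbers with |q| < 1 and a ≠ 0. Define α_n = (a^{-n} + a^{n+1}) q^{n(n+1)/2} and β_n = (-a; q)_{n+1} (-q/a; q)_n / (q²; q)_{2n} for n ≥ 0. Then (α_n, β_n) form a Bailey pair relative to q; that is, for every n ≥ 0, β_n = ∑_{r=0}^n α_r / ((q; q)_{n-r} (q²; q)_{n+r}). -/

import Mathlib

/-- Finite q-Pochhammer symbol `(a; q)_n = ∏_{k=0}^{n-1} (1 - a q^k)`. -/
noncomputable def qPoch (a q : ℂ) (n : ℕ) : ℂ := ∏ k ∈ Finset.range n, (1 - a * q ^ k)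

/-- triangular numbers -/
def triN : ℕ → ℕ
  | 0 => 0
  | n+1 => triN n + n

/-- Gaussian binomial coefficients via the Pascal recursion. -/
def qb (q : ℂ) : ℕ → ℕ → ℂ
  | _, 0 => 1
  | 0, _+1 => 0
  | m+1, j+1 => qb q m j + q^(j+1) * qb q m (j+1)

lemma triN_add (a b : ℕ) : triN (a+b) = triN a + triN b + a*b := by
  induction b with
  | zero => simp [triN]
  | succ b ih => show triN (a+b) + (a+b) = _; rw [ih]; simp [triN]; ring

lemma two_triN (r : ℕ) : 2 * triN r + r = r * r := by
  induction r with
  | zero => simp [triN]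
  | succ r ih => simp [triN]; nlinarith [ih]

lemma triN_eq_sum (n : ℕ) : triN n = ∑ i ∈ Finset.range n, i := by
  induction n with
  | zero => rfl
  | succ n ih => rw [Finset.sum_range_succ, ← ih]; rfl

lemma triN_eq_div (r : ℕ) : r * (r+1) / 2 = triN (r+1) := by
  have h2 := two_triN (r+1)
  have hp : (r+1)*(r+1) = r*(r+1) + (r+1) := by ring
  omega

lemma expA (n r : ℕ) (h : r ≤ n) :
    triN (n-r) + n*(n+r+1) = triN n + n*(n+1) + triN (r+1) := by
  obtain ⟨t, rfl⟩ : ∃ t, n = r + t := ⟨n - r, by omega⟩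
  have e1 : r + t - r = t := by omega
  rw [e1, triN_add, show r + 1 = r + 1 from rfl, triN_add r 1]
  have h2 := two_triN r
  simp [triN]
  nlinarith [h2]

lemma expB (n r : ℕ) (h : r ≤ n) :
    triN (n+r+1) + n*(n-r) = triN n + n*(n+1) + triN (r+1) := by
  obtain ⟨t, rfl⟩ : ∃ t, n = r + t := ⟨n - r, by omega⟩
  have e1 : r + t - r = t := by omega
  rw [e1, show r+t+r+1 = (r+t)+(r+1) by omega, triN_add (r+t) (r+1), triN_add r 1]
  simp [triN]
  ring

lemma qb_zero_of_lt (q : ℂ) : ∀ m j, m < j → qb q m j = 0 := by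
  intro m
  induction m with
  | zero => intro j h; match j, h with | j+1, _ => rfl
  | succ m ih =>
    intro j h
    match j, h with
    | j+1, h =>
      show qb q m j + q^(j+1) * qb q m (j+1) = 0
      rw [ih j (by omega), ih (j+1) (by omega)]; ring

lemma qb_self (q : ℂ) : ∀ m, qb q m m = 1 := by
  intro m
  induction m with
  | zero => rfl
  | succ m ih =>
    show qb q m m + q^(m+1) * qb q m (m+1) = 1
    rw [ih, qb_zero_of_lt q m (m+1) (by omega)]; ring

lemma qb_theorem (q x y : ℂ) : ∀ m, ∏ k ∈ Finset.range m, (x + y * q^k)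
    = ∑ j ∈ Finset.range (m+1), qb q m j * q^(triN j) * y^j * x^(m-j) := by
  intro m
  induction m generalizing y with
  | zero => simp [qb, triN]
  | succ m ih =>
    rw [Finset.prod_range_succ']
    have h1 : ∀ k, x + y * q^(k+1) = x + (y*q) * q^k := by intro k; ring
    simp only [h1, pow_zero, mul_one]
    rw [ih (y*q), mul_add]
    set T : ℕ → ℂ := fun j => qb q m j * q^(triN j) * (y*q)^j * x^(m-j) with hT
    set U : ℕ → ℂ := fun j => qb q (m+1) j * q^(triN j) * y^j * x^(m+1-j) with hU
    have hU0 : U 0 = x^(m+1) := by simp [hU, qb, triN]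
    have hT0x : T 0 * x = x^(m+1) := by
      simp [hT, qb, triN]; rw [← pow_succ]
    have hz1 : qb q m (m+1) = 0 := qb_zero_of_lt q m (m+1) (Nat.lt_succ_self m)
    have hTm1 : T (m+1) = 0 := by simp [hT, hz1]
    have key : ∀ j ∈ Finset.range (m+1), U (j+1) = T j * y + T (j+1) * x := by
      intro j hj
      simp only [Finset.mem_range] at hj
      have hrec : qb q (m+1) (j+1) = qb q m j + q^(j+1) * qb q m (j+1) := rfl
      have e1 : triN (j+1) = triN j + j := rfl
      have e3 : m + 1 - (j+1) = m - j := by omega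
      rcases Nat.lt_or_ge j m with h | h
      · have e4 : m - j = (m - (j+1)) + 1 := by omega
        simp only [hU, hT, hrec, e1, e3, e4, mul_pow, pow_succ, pow_add]
        ring
      · have hj' : j = m := by omega
        subst hj'
        simp only [hU, hT, hrec, e1, e3, hz1]
        simp [pow_succ, mul_pow, hz1]
        ring
    calc (∑ j ∈ Finset.range (m+1), T j) * x + (∑ j ∈ Finset.range (m+1), T j) * y
        = (∑ j ∈ Finset.range (m+1), (T j * y + T (j+1) * x)) + T 0 * x := by
          rw [Finset.sum_add_distrib, ← Finset.sum_mul, ← Finset.sum_mul,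
            Finset.sum_range_succ' (fun j => T j) m, Finset.sum_range_succ (fun j => T (j+1)) m,
            hTm1]
          ring
      _ = (∑ j ∈ Finset.range (m+1), U (j+1)) + U 0 := by
          rw [Finset.sum_congr rfl key, hU0, hT0x]
      _ = ∑ j ∈ Finset.range (m+1+1), U j := (Finset.sum_range_succ' U (m+1)).symm

lemma qPoch_succ (a q : ℂ) (n : ℕ) : qPoch a q (n+1) = qPoch a q n * (1 - a * q^n) :=
  Finset.prod_range_succ _ n

lemma qPoch_succ' (a q : ℂ) (n : ℕ) : qPoch a q (n+1) = (1 - a) * qPoch (a*q) q n := by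
  rw [qPoch, Finset.prod_range_succ']
  simp [qPoch, mul_comm, pow_succ]
  left
  apply Finset.prod_congr rfl
  intro k _
  ring_nf

lemma qPoch_q_succ (q : ℂ) (n : ℕ) : qPoch q q (n+1) = (1 - q) * qPoch (q^2) q n := by
  rw [qPoch_succ', sq]

lemma qPoch_q_ne_zero (q : ℂ) (hq : ‖q‖ < 1) (m : ℕ) : qPoch q q m ≠ 0 := by
  rw [qPoch]
  apply Finset.prod_ne_zero_iff.2
  intro k _
  intro h
  have : q * q ^ k = 1 := by linear_combination -h
  have h2 : ‖q * q^k‖ < 1 := by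
    calc ‖q * q^k‖ = ‖q‖ * ‖q‖^k := by rw [norm_mul, norm_pow]
    _ ≤ ‖q‖ * 1 := by
        apply mul_le_mul_of_nonneg_left _ (norm_nonneg q)
        exact pow_le_one₀ (norm_nonneg q) hq.le
    _ < 1 := by rw [mul_one]; exact hq
  rw [this] at h2; simp at h2

lemma qPoch_q2_ne_zero (q : ℂ) (hq : ‖q‖ < 1) (m : ℕ) : qPoch (q^2) q m ≠ 0 := by
  intro h
  have := qPoch_q_succ q m
  rw [h, mul_zero] at this
  exact qPoch_q_ne_zero q hq (m+1) this

lemma qb_mul_qPoch (q : ℂ) : ∀ m j, j ≤ m →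
    qPoch q q j * qPoch q q (m-j) * qb q m j = qPoch q q m := by
  intro m
  induction m with
  | zero => intro j hj; interval_cases j; simp [qb, qPoch]
  | succ m ih =>
    intro j hj
    match j with
    | 0 => simp [qb, qPoch]
    | j+1 =>
      have hrec : qb q (m+1) (j+1) = qb q m j + q^(j+1) * qb q m (j+1) := rfl
      have e3 : m + 1 - (j+1) = m - j := by omega
      rw [hrec, e3]
      rcases Nat.lt_or_ge j m with h | h
      · have e4 : m - j = (m - (j+1)) + 1 := by omega
        have hq1 : qPoch q q (j+1) = qPoch q q j * (1 - q * q^j) := qPoch_succ q q j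
        have hq2 : qPoch q q (m-j) = qPoch q q (m-(j+1)) * (1 - q * q^(m-(j+1))) := by
          rw [e4]; exact qPoch_succ q q _
        have ih1 := ih j (by omega)
        have ih2 := ih (j+1) (by omega)
        have e5 : q * q^j = q^(j+1) := (pow_succ q j).symm ▸ by ring
        have e6 : q * q^(m-(j+1)) = q^(m-j) := by
          rw [← pow_succ']; congr 1; omega
        have e7 : q^(j+1) * q^(m-j) = q * q^m := by
          rw [← pow_add, ← pow_succ']; congr 1; omega
        have e8 : q^j * q^(m-j) = q^m := by rw [← pow_add]; congr 1; omega
        calc qPoch q q (j+1) * qPoch q q (m-j) * (qb q m j + q ^ (j+1) * qb q m (j+1))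
            = (1 - q*q^j) * (qPoch q q j * qPoch q q (m-j) * qb q m j)
              + q^(j+1) * (1 - q*q^(m-(j+1))) * (qPoch q q (j+1) * qPoch q q (m-(j+1)) * qb q m (j+1)) := by
              rw [hq1, hq2]; ring
          _ = (1 - q*q^j) * qPoch q q m + q^(j+1) * (1 - q*q^(m-(j+1))) * qPoch q q m := by
              rw [ih1, ih2]
          _ = qPoch q q (m+1) := by
              rw [qPoch_succ q q m, e5, e6]
              linear_combination qPoch q q m * e7 - 2*q*qPoch q q m * e8
      · have hj' : j = m := by omega
        subst hj'
        rw [qb_zero_of_lt q j (j+1) (Nat.lt_succ_self j), qb_self]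
        simp [qPoch]



lemma qb_symm (q : ℂ) (hq : ‖q‖ < 1) (m j : ℕ) (hj : j ≤ m) :
    qb q m j = qb q m (m-j) := by
  have h1 := qb_mul_qPoch q m j hj
  have h2 := qb_mul_qPoch q m (m-j) (by omega)
  rw [show m-(m-j) = j by omega] at h2
  have hz1 := qPoch_q_ne_zero q hq j
  have hz2 := qPoch_q_ne_zero q hq (m-j)
  apply mul_left_cancel₀ (mul_ne_zero hz1 hz2)
  rw [h1]
  rw [← h2]; ring

lemma key_identity (q a : ℂ) (hq : ‖q‖ < 1) (ha : a ≠ 0) (hq0 : q ≠ 0) (n : ℕ) :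
    qPoch (-a) q (n+1) * qPoch (-(q/a)) q n
    = ∑ r ∈ Finset.range (n+1),
        (a ^ (-(r : ℤ)) + a ^ ((r : ℤ) + 1)) * q ^ (r * (r + 1) / 2) * qb q (2*n+1) (n-r) := by
  apply mul_left_cancel₀ (pow_ne_zero n ha)
  apply mul_left_cancel₀ (pow_ne_zero (triN n + n*(n+1)) hq0)
  have hA : qPoch (-a) q (n+1) = ∏ k ∈ Finset.range (n+1), (1 + a * q^k) := by
    apply Finset.prod_congr rfl; intro k _; ring
  have hB : a^n * qPoch (-(q/a)) q n = ∏ k ∈ Finset.range n, (a + q^(k+1)) := by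
    rw [qPoch]
    calc a^n * ∏ k ∈ Finset.range n, (1 - -(q/a) * q ^ k)
        = ∏ k ∈ Finset.range n, (a * (1 - -(q/a) * q ^ k)) := by
          rw [Finset.prod_mul_distrib, Finset.prod_const, Finset.card_range]
      _ = ∏ k ∈ Finset.range n, (a + q^(k+1)) := by
          apply Finset.prod_congr rfl; intro k _
          field_simp; ring
  have hD : ∏ k ∈ Finset.range n, (q^n + a * q^k)
      = q^(triN n) * ∏ k ∈ Finset.range n, (a + q^(k+1)) := by
    have step : ∀ k ∈ Finset.range n, q^n + a * q^k = q^k * (q^(n-k) + a) := by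
      intro k hk
      simp only [Finset.mem_range] at hk
      rw [mul_add, ← pow_add, show k + (n-k) = n by omega]
      ring
    rw [Finset.prod_congr rfl step, Finset.prod_mul_distrib, Finset.prod_pow_eq_pow_sum]
    rw [← triN_eq_sum]
    congr 1
    calc ∏ k ∈ Finset.range n, (q^(n-k) + a)
        = ∏ k ∈ Finset.range n, (q^((n-1-k)+1) + a) := by
          apply Finset.prod_congr rfl; intro k hk
          simp only [Finset.mem_range] at hk
          congr 2
          omega
      _ = ∏ k ∈ Finset.range n, (q^(k+1) + a) :=
          Finset.prod_range_reflect (fun j => q^(j+1) + a) n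
      _ = ∏ k ∈ Finset.range n, (a + q^(k+1)) := by
          apply Finset.prod_congr rfl; intro k _; ring
  have hE : ∏ i ∈ Finset.range (n+1), (q^n + a * q^(n+i))
      = q^(n*(n+1)) * ∏ i ∈ Finset.range (n+1), (1 + a * q^i) := by
    have step : ∀ i ∈ Finset.range (n+1), q^n + a * q^(n+i) = q^n * (1 + a * q^i) := by
      intro i _
      rw [pow_add]; ring
    rw [Finset.prod_congr rfl step, Finset.prod_mul_distrib, Finset.prod_const,
      Finset.card_range, ← pow_mul]
  have hC : ∏ k ∈ Finset.range (2*n+1), (q^n + a * q^k)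
      = q^(triN n + n*(n+1)) * (a^n * (qPoch (-a) q (n+1) * qPoch (-(q/a)) q n)) := by
    rw [show 2*n+1 = n + (n+1) by ring, Finset.prod_range_add, hD, hE, hA, ← hB]
    ring
  rw [← hC, qb_theorem q (q^n) a (2*n+1)]
  -- now reorganize the sum
  rw [show 2*n+1+1 = (n+1) + (n+1) by ring, Finset.sum_range_add]
  rw [← Finset.sum_range_reflect
    (fun j => qb q (2*n+1) j * q^(triN j) * a^j * (q^n)^(2*n+1-j)) (n+1)]
  rw [← Finset.sum_add_distrib, Finset.mul_sum, Finset.mul_sum]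
  apply Finset.sum_congr rfl
  intro r hr
  simp only [Finset.mem_range] at hr
  have hr' : r ≤ n := by omega
  have en1 : n + 1 - 1 - r = n - r := by omega
  rw [en1]
  have e1 : 2*n+1 - (n-r) = n+r+1 := by omega
  have e2 : 2*n+1 - (n+1+r) = n-r := by omega
  have e3 : n+1+r = n+r+1 := by omega
  rw [e1, e2, e3]
  have hsymm : qb q (2*n+1) (n+r+1) = qb q (2*n+1) (n-r) := by
    rw [qb_symm q hq (2*n+1) (n+r+1) (by omega), show 2*n+1-(n+r+1) = n-r by omega]
  rw [hsymm]
  -- powers of q^n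
  rw [← pow_mul q n (n+r+1), ← pow_mul q n (n-r)]
  -- zpow facts
  have za : (a ^ (-(r : ℤ)) + a ^ ((r : ℤ) + 1)) * a^n = a^(n-r) + a^(n+r+1) := by
    have h1 : a^(n-r) = a ^ ((n : ℤ) - r) := by
      rw [show ((n:ℤ) - r) = ((n - r : ℕ) : ℤ) by omega, zpow_natCast]
    have h2 : a^(n+r+1) = a ^ ((n : ℤ) + r + 1) := by
      rw [show ((n:ℤ) + r + 1) = ((n + r + 1 : ℕ) : ℤ) by omega, zpow_natCast]
    rw [h1, h2, add_mul, show a^n = a^(n:ℤ) from (zpow_natCast a n).symm,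
      ← zpow_add₀ ha, ← zpow_add₀ ha]
    congr 2 <;> omega
  have qa : q ^ (triN n + n*(n+1)) * q ^ (r*(r+1)/2) = q ^ (triN (n-r) + n*(n+r+1)) := by
    rw [← pow_add, triN_eq_div, expA n r hr']
  have qb' : q ^ (triN n + n*(n+1)) * q ^ (r*(r+1)/2) = q ^ (triN (n+r+1) + n*(n-r)) := by
    rw [← pow_add, triN_eq_div, expB n r hr']
  calc qb q (2*n+1) (n-r) * q^(triN (n-r)) * a^(n-r) * q^(n*(n+r+1))
        + qb q (2*n+1) (n-r) * q^(triN (n+r+1)) * a^(n+r+1) * q^(n*(n-r))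
      = qb q (2*n+1) (n-r) * (q^(triN (n-r) + n*(n+r+1)) * a^(n-r)
          + q^(triN (n+r+1) + n*(n-r)) * a^(n+r+1)) := by
        rw [pow_add, pow_add]; ring
    _ = qb q (2*n+1) (n-r) * ((q ^ (triN n + n*(n+1)) * q ^ (r*(r+1)/2)) * (a^(n-r) + a^(n+r+1))) := by
        rw [← qa, ← qb']; ring
    _ = q ^ (triN n + n*(n+1)) *
        (a ^ n * ((a ^ (-(r : ℤ)) + a ^ ((r : ℤ) + 1)) * q ^ (r * (r + 1) / 2) * qb q (2*n+1) (n-r))) := by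
        rw [← za]; ring

/-- The Andrews–Berndt Bailey pair relative to `q`. -/
theorem andrews_berndt_bailey_pair (q a : ℂ) (hq : ‖q‖ < 1) (ha : a ≠ 0) (n : ℕ) :
    qPoch (-a) q (n + 1) * qPoch (-(q / a)) q n / qPoch (q ^ 2) q (2 * n) =
    ∑ r ∈ Finset.range (n + 1),
      (a ^ (-(r : ℤ)) + a ^ ((r : ℤ) + 1)) * q ^ (r * (r + 1) / 2) /
        (qPoch q q (n - r) * qPoch (q ^ 2) q (n + r)) := by
  rcases eq_or_ne q 0 with rfl | hq0
  · -- q = 0 case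
    have h1 : ∀ m, qPoch 0 0 m = 1 := by
      intro m; rw [qPoch]; apply Finset.prod_eq_one; intro k _; ring
    have h2 : qPoch (-a) 0 (n+1) = 1 + a := by
      rw [qPoch, Finset.prod_range_succ']
      simp
    rw [show -((0:ℂ)/a) = 0 by simp, show ((0:ℂ)^2) = 0 by ring, h1, h1, h2]
    rw [Finset.sum_eq_single 0]
    · simp [h1]
    · intro r _ hr
      have : r * (r+1) / 2 ≠ 0 := by
        rcases Nat.exists_eq_succ_of_ne_zero hr with ⟨s, rfl⟩
        show (s+1)*(s+1+1)/2 ≠ 0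
        have h3 : (s+1)*(s+1+1) = 2*(s+1) + s*(s+1) := by ring
        omega
      rw [zero_pow this]
      simp
    · intro h; simp at h
  · -- q ≠ 0 case
    have h1q : (1 : ℂ) - q ≠ 0 := by
      intro h
      have : q = 1 := by linear_combination -h
      rw [this] at hq; simp at hq
    have key := key_identity q a hq ha hq0 n
    have step : ∀ r ∈ Finset.range (n+1),
        (a ^ (-(r : ℤ)) + a ^ ((r : ℤ) + 1)) * q ^ (r * (r + 1) / 2) /
          (qPoch q q (n - r) * qPoch (q ^ 2) q (n + r))
        = ((a ^ (-(r : ℤ)) + a ^ ((r : ℤ) + 1)) * q ^ (r * (r + 1) / 2) * qb q (2*n+1) (n-r))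
            * ((1-q) / qPoch q q (2*n+1)) := by
      intro r hr
      simp only [Finset.mem_range] at hr
      have hr' : r ≤ n := by omega
      have hmul := qb_mul_qPoch q (2*n+1) (n-r) (by omega)
      rw [show 2*n+1 - (n-r) = n+r+1 by omega] at hmul
      have hsucc := qPoch_q_succ q (n+r)
      have nz1 := qPoch_q_ne_zero q hq (n-r)
      have nz2 := qPoch_q2_ne_zero q hq (n+r)
      have nz3 := qPoch_q_ne_zero q hq (2*n+1)
      have nz4 := qPoch_q_ne_zero q hq (n+r+1)
      rw [← mul_div_assoc, div_eq_div_iff (mul_ne_zero nz1 nz2) nz3]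
      rw [show (n+r) + 1 = n+r+1 from rfl] at hsucc
      linear_combination (-((a ^ (-(r : ℤ)) + a ^ ((r : ℤ) + 1)) * q ^ (r * (r + 1) / 2))) * hmul
        + ((a ^ (-(r : ℤ)) + a ^ ((r : ℤ) + 1)) * q ^ (r * (r + 1) / 2)
            * qb q (2*n+1) (n-r) * qPoch q q (n-r)) * hsucc
    rw [Finset.sum_congr rfl step, ← Finset.sum_mul, ← key]
    have h2n : qPoch q q (2*n+1) = (1-q) * qPoch (q^2) q (2*n) := qPoch_q_succ q (2*n)
    rw [h2n]
    have nz5 := qPoch_q2_ne_zero q hq (2*n)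
    field_simp
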